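/- Fix σ > 0, B > 0, R > 0. Let μ be a probability measure on ℝ^p with μ{x : ‖x‖ ≤ B} = 1, and let G* be a probability measure with G*{β : ‖β‖ ≤ R} = 1. Define T_{G*} = ∫ ( ∫ √(f_x^{G*}(y)) dy )² dμ(x). Then there exists a universal constant C > 0 (not depending on p, σ, B, R, μ, G*) such that T_{G*} ≤ C (RB + σ)² / σ. -/

import Mathlib

set_option maxHeartbeats 1000000


open MeasureTheory Real
open scoped RealInnerProductSpace ENNReal

/-- The standard normal density. -/
noncomputable def stdNormalPdf (z : ℝ) : ℝ := (Real.sqrt (2 * Real.pi))⁻¹ * Real.exp (-z ^ 2 / 2)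

/-- The mixture-of-linear-regressions conditional density
`f_x^G(y) = (1/σ) ∫ φ((y − xᵀβ)/σ) dG(β)`. -/
noncomputable def mixDensity {p : ℕ} (σ : ℝ) (G : Measure (EuclideanSpace ℝ (Fin p)))
    (x : EuclideanSpace ℝ (Fin p)) (y : ℝ) : ℝ :=
  σ⁻¹ * ∫ β, stdNormalPdf ((y - ⟪x, β⟫) / σ) ∂G

/-- `T_{G*} = ∫ (∫ √(f_x^{G*}(y)) dy)² dμ(x)`. -/
noncomputable def TGstar (p : ℕ) (σ : ℝ)
    (Gstar μ : Measure (EuclideanSpace ℝ (Fin p))) : ℝ :=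
  ∫ x, (∫ y : ℝ, Real.sqrt (mixDensity σ Gstar x y)) ^ 2 ∂μ

lemma stdNormalPdf_nonneg (z : ℝ) : 0 ≤ stdNormalPdf z := by
  unfold stdNormalPdf; positivity

lemma key {p : ℕ} (σ : ℝ) (hσ : 0 < σ) (G : Measure (EuclideanSpace ℝ (Fin p)))
    [IsProbabilityMeasure G] (x : EuclideanSpace ℝ (Fin p)) (y w : ℝ)
    (hw : ∀ᵐ β ∂G, w ^ 2 ≤ ((y - ⟪x, β⟫) / σ) ^ 2) :
    Real.sqrt (mixDensity σ G x y) ≤ (Real.sqrt σ)⁻¹ * Real.exp (-w ^ 2 / 4) := by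
  have h3 : (Real.sqrt (2 * Real.pi))⁻¹ ≤ 1 := by
    rw [inv_le_one_iff₀]
    right
    rw [show (1:ℝ) = Real.sqrt 1 by simp]
    exact Real.sqrt_le_sqrt (by nlinarith [Real.pi_gt_three])
  have h1 : ∫ β, stdNormalPdf ((y - ⟪x, β⟫) / σ) ∂G ≤ Real.exp (-w ^ 2 / 2) := by
    calc ∫ β, stdNormalPdf ((y - ⟪x, β⟫) / σ) ∂G
        ≤ ∫ _, Real.exp (-w ^ 2 / 2) ∂G := by
          refine integral_mono_of_nonneg (ae_of_all _ fun β => stdNormalPdf_nonneg _)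
            (integrable_const _) (hw.mono fun β hβ => ?_)
          unfold stdNormalPdf
          have h2 : Real.exp (-((y - ⟪x, β⟫) / σ) ^ 2 / 2) ≤ Real.exp (-w ^ 2 / 2) :=
            Real.exp_le_exp.mpr (by linarith)
          calc (Real.sqrt (2 * Real.pi))⁻¹ * Real.exp (-((y - ⟪x, β⟫) / σ) ^ 2 / 2)
              ≤ Real.exp (-((y - ⟪x, β⟫) / σ) ^ 2 / 2) :=
                mul_le_of_le_one_left (Real.exp_nonneg _) h3
            _ ≤ Real.exp (-w ^ 2 / 2) := h2
      _ = Real.exp (-w ^ 2 / 2) := by simp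
  have hmix : mixDensity σ G x y ≤ σ⁻¹ * Real.exp (-w ^ 2 / 2) := by
    unfold mixDensity
    exact mul_le_mul_of_nonneg_left h1 (by positivity)
  have hs : Real.sqrt (σ⁻¹ * Real.exp (-w ^ 2 / 2))
      = (Real.sqrt σ)⁻¹ * Real.exp (-w ^ 2 / 4) := by
    rw [Real.sqrt_mul (by positivity), Real.sqrt_inv]
    congr 1
    have he : Real.exp (-w ^ 2 / 2) = (Real.exp (-w ^ 2 / 4)) ^ 2 := by
      rw [← Real.exp_nat_mul]
      congr 1
      push_cast
      ring
    rw [he]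
    exact Real.sqrt_sq (Real.exp_nonneg _)
  calc Real.sqrt (mixDensity σ G x y) ≤ Real.sqrt (σ⁻¹ * Real.exp (-w ^ 2 / 2)) :=
        Real.sqrt_le_sqrt hmix
    _ = (Real.sqrt σ)⁻¹ * Real.exp (-w ^ 2 / 4) := hs

private lemma TGstar_bound_aux {p : ℕ} (σ B R : ℝ) (hσ : 0 < σ) (hB : 0 < B) (hR : 0 < R)
    (μ : Measure (EuclideanSpace ℝ (Fin p))) [IsProbabilityMeasure μ]
    (hμB : μ ({x : EuclideanSpace ℝ (Fin p) | ‖x‖ ≤ B}ᶜ) = 0)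
    (Gstar : Measure (EuclideanSpace ℝ (Fin p))) [IsProbabilityMeasure Gstar]
    (hGR : Gstar ({β : EuclideanSpace ℝ (Fin p) | ‖β‖ ≤ R}ᶜ) = 0) :
    (∫ x, (∫ y : ℝ, Real.sqrt (mixDensity σ Gstar x y)) ^ 2 ∂μ) ≤ 64 * (R * B + σ) ^ 2 / σ := by
  set a := R * B with ha
  have ha0 : 0 < a := mul_pos hR hB
  have hb : (0:ℝ) < 1 / (4 * σ ^ 2) := by positivity
  set f0 : ℝ → ℝ := fun y => Real.exp (-(1 / (4 * σ ^ 2)) * y ^ 2) with hf0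
  have hf0i : Integrable f0 := integrable_exp_neg_mul_sq hb
  have hf0int : ∫ y, f0 y ≤ 4 * σ := by
    rw [hf0, integral_gaussian]
    calc Real.sqrt (Real.pi / (1 / (4 * σ ^ 2))) ≤ Real.sqrt ((4 * σ) ^ 2) := by
          apply Real.sqrt_le_sqrt
          rw [div_div_eq_mul_div, div_one]
          nlinarith [Real.pi_le_four, sq_nonneg σ]
      _ = 4 * σ := Real.sqrt_sq (by positivity)
  set g : ℝ → ℝ → ℝ := fun c y => Real.exp (-((y - c) / σ) ^ 2 / 4) with hg
  have hshift : ∀ c : ℝ, g c = fun y => f0 (y - c) := by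
    intro c; funext y
    simp only [hg, hf0]
    congr 1
    field_simp
  have hgi : ∀ c, Integrable (g c) := fun c => by
    rw [hshift c]; exact hf0i.comp_sub_right c
  have hgint : ∀ c, ∫ y, g c y ≤ 4 * σ := fun c => by
    rw [hshift c]
    rw [integral_sub_right_eq_self f0 c]
    exact hf0int
  set ind : ℝ → ℝ := (Set.Icc (-a) a).indicator (fun _ => 1) with hind
  have hindi : Integrable ind := by
    rw [hind]
    exact (integrable_indicator_iff measurableSet_Icc).mpr
      (integrableOn_const measure_Icc_lt_top.ne)
  have hindint : ∫ y, ind y = 2 * a := by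
    rw [hind, integral_indicator measurableSet_Icc, setIntegral_const, Real.volume_real_Icc_of_le (by linarith)]
    rw [smul_eq_mul, mul_one]
    ring
  -- a.e. bound on G
  have hGae : ∀ᵐ β ∂Gstar, ‖β‖ ≤ R := by
    rw [ae_iff]
    rw [show {β : EuclideanSpace ℝ (Fin p) | ¬ ‖β‖ ≤ R} = {β : EuclideanSpace ℝ (Fin p) | ‖β‖ ≤ R}ᶜ by rfl]
    exact hGR
  have hμae : ∀ᵐ x ∂μ, ‖x‖ ≤ B := by
    rw [ae_iff]
    rw [show {x : EuclideanSpace ℝ (Fin p) | ¬ ‖x‖ ≤ B} = {x : EuclideanSpace ℝ (Fin p) | ‖x‖ ≤ B}ᶜ by rfl]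
    exact hμB
  have hmain : ∀ᵐ x ∂μ, (∫ y : ℝ, Real.sqrt (mixDensity σ Gstar x y)) ^ 2
      ≤ 64 * (R * B + σ) ^ 2 / σ := by
    refine hμae.mono fun x hx => ?_
    have hinner : ∀ᵐ β ∂Gstar, |⟪x, β⟫| ≤ a := by
      refine hGae.mono fun β hβ => ?_
      calc |⟪x, β⟫| ≤ ‖x‖ * ‖β‖ := abs_real_inner_le_norm x β
        _ ≤ B * R := mul_le_mul hx hβ (norm_nonneg β) hB.le
        _ = a := by rw [ha]; ring
    -- pointwise bound
    have hpt : ∀ y : ℝ, Real.sqrt (mixDensity σ Gstar x y)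
        ≤ (Real.sqrt σ)⁻¹ * (ind y + g a y + g (-a) y) := by
      intro y
      have hindnn : 0 ≤ ind y := by
        rw [hind]; exact Set.indicator_nonneg (fun _ _ => zero_le_one) y
      have hgann : 0 ≤ g a y := Real.exp_nonneg _
      have hgann : 0 ≤ g (-a) y := Real.exp_nonneg _
      rcases le_or_gt y a with h1 | h1
      · rcases le_or_gt (-a) y with h2 | h2
        · -- middle case: w = 0
          have hk := key σ hσ Gstar x y 0
            (ae_of_all _ fun β => by simpa using sq_nonneg ((y - ⟪x, β⟫) / σ))
          have hind1 : ind y = 1 := by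
            rw [hind, Set.indicator_of_mem (Set.mem_Icc.mpr ⟨h2, h1⟩)]
          calc Real.sqrt (mixDensity σ Gstar x y) ≤ (Real.sqrt σ)⁻¹ * Real.exp (-0 ^ 2 / 4) := hk
            _ = (Real.sqrt σ)⁻¹ * 1 := by norm_num
            _ ≤ (Real.sqrt σ)⁻¹ * (ind y + g a y + g (-a) y) := by
                apply mul_le_mul_of_nonneg_left _ (by positivity)
                rw [hind1]; linarith
        · -- y < -a : w = (y - (-a))/σ
          have hk := key σ hσ Gstar x y ((y - (-a)) / σ) (hinner.mono fun β hβ => by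
            obtain ⟨hm1, hm2⟩ := abs_le.mp hβ
            have hnum : (y - (-a)) ^ 2 ≤ (y - ⟪x, β⟫) ^ 2 := by
              nlinarith [mul_nonneg (by linarith : (0:ℝ) ≤ a + ⟪x, β⟫)
                (by linarith : (0:ℝ) ≤ -(2 * y - ⟪x, β⟫ + a))]
            calc ((y - (-a)) / σ) ^ 2 = (y - (-a)) ^ 2 / σ ^ 2 := by rw [div_pow]
              _ ≤ (y - ⟪x, β⟫) ^ 2 / σ ^ 2 := by gcongr
              _ = ((y - ⟪x, β⟫) / σ) ^ 2 := (div_pow _ _ _).symm)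
          calc Real.sqrt (mixDensity σ Gstar x y)
              ≤ (Real.sqrt σ)⁻¹ * Real.exp (-((y - (-a)) / σ) ^ 2 / 4) := hk
            _ = (Real.sqrt σ)⁻¹ * g (-a) y := by rw [hg]
            _ ≤ (Real.sqrt σ)⁻¹ * (ind y + g a y + g (-a) y) := by
                apply mul_le_mul_of_nonneg_left _ (by positivity)
                linarith
      · -- a < y : w = (y - a)/σ
        have hk := key σ hσ Gstar x y ((y - a) / σ) (hinner.mono fun β hβ => by
          obtain ⟨hm1, hm2⟩ := abs_le.mp hβ
          have hnum : (y - a) ^ 2 ≤ (y - ⟪x, β⟫) ^ 2 := by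
            nlinarith [mul_nonneg (by linarith : (0:ℝ) ≤ a - ⟪x, β⟫)
              (by linarith : (0:ℝ) ≤ 2 * y - a - ⟪x, β⟫)]
          calc ((y - a) / σ) ^ 2 = (y - a) ^ 2 / σ ^ 2 := by rw [div_pow]
            _ ≤ (y - ⟪x, β⟫) ^ 2 / σ ^ 2 := by gcongr
            _ = ((y - ⟪x, β⟫) / σ) ^ 2 := (div_pow _ _ _).symm)
        calc Real.sqrt (mixDensity σ Gstar x y)
            ≤ (Real.sqrt σ)⁻¹ * Real.exp (-((y - a) / σ) ^ 2 / 4) := hk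
          _ = (Real.sqrt σ)⁻¹ * g a y := by rw [hg]
          _ ≤ (Real.sqrt σ)⁻¹ * (ind y + g a y + g (-a) y) := by
              apply mul_le_mul_of_nonneg_left _ (by positivity)
              linarith
    -- integrate
    have hH : Integrable (fun y => (Real.sqrt σ)⁻¹ * (ind y + g a y + g (-a) y)) :=
      (((hindi.add (hgi a)).add (hgi (-a))).const_mul _)
    have hS : (∫ y : ℝ, Real.sqrt (mixDensity σ Gstar x y))
        ≤ (Real.sqrt σ)⁻¹ * (2 * a + 8 * σ) := by
      calc (∫ y : ℝ, Real.sqrt (mixDensity σ Gstar x y))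
          ≤ ∫ y, (Real.sqrt σ)⁻¹ * (ind y + g a y + g (-a) y) :=
            integral_mono_of_nonneg (ae_of_all _ fun y => Real.sqrt_nonneg _) hH
              (ae_of_all _ hpt)
        _ = (Real.sqrt σ)⁻¹ * ∫ y, (ind y + g a y + g (-a) y) := by
            rw [integral_const_mul]
        _ = (Real.sqrt σ)⁻¹ * ((∫ y, ind y) + (∫ y, g a y) + ∫ y, g (-a) y) := by
            have hI1 : Integrable (fun y => ind y + g a y) := hindi.add (hgi a)
            rw [integral_add hI1 (hgi (-a)), integral_add hindi (hgi a)]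
        _ ≤ (Real.sqrt σ)⁻¹ * (2 * a + 8 * σ) := by
            apply mul_le_mul_of_nonneg_left _ (by positivity)
            have := hgint a
            have := hgint (-a)
            rw [hindint]
            linarith
    have hSnn : 0 ≤ ∫ y : ℝ, Real.sqrt (mixDensity σ Gstar x y) :=
      integral_nonneg fun y => Real.sqrt_nonneg _
    have hsq : (∫ y : ℝ, Real.sqrt (mixDensity σ Gstar x y)) ^ 2
        ≤ ((Real.sqrt σ)⁻¹ * (2 * a + 8 * σ)) ^ 2 := pow_le_pow_left₀ hSnn hS 2
    refine hsq.trans ?_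
    have heq : ((Real.sqrt σ)⁻¹ * (2 * a + 8 * σ)) ^ 2 = (2 * a + 8 * σ) ^ 2 / σ := by
      rw [mul_pow, ← Real.sqrt_inv, Real.sq_sqrt (by positivity), div_eq_mul_inv, mul_comm]
    rw [heq, ← ha]
    gcongr ?_ / σ
    nlinarith [ha0, hσ]
  calc (∫ x, (∫ y : ℝ, Real.sqrt (mixDensity σ Gstar x y)) ^ 2 ∂μ)
      ≤ ∫ _, 64 * (R * B + σ) ^ 2 / σ ∂μ :=
        integral_mono_of_nonneg (ae_of_all _ fun x => sq_nonneg _) (integrable_const _) hmain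
    _ = 64 * (R * B + σ) ^ 2 / σ := by simp


/-- there is a universal constant `C` (independent of the dimension `p`,
`σ`, `B`, `R`, `μ` and `G*`) such that `T_{G*} ≤ C (RB + σ)² / σ`. -/
theorem TGstar_bound :
    ∃ C : ℝ, 0 < C ∧
      ∀ (p : ℕ) (σ B R : ℝ), 0 < σ → 0 < B → 0 < R →
      ∀ (μ : Measure (EuclideanSpace ℝ (Fin p))), IsProbabilityMeasure μ →
        μ ({x : EuclideanSpace ℝ (Fin p) | ‖x‖ ≤ B}ᶜ) = 0 →
      ∀ (Gstar : Measure (EuclideanSpace ℝ (Fin p))), IsProbabilityMeasure Gstar →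
        Gstar ({β : EuclideanSpace ℝ (Fin p) | ‖β‖ ≤ R}ᶜ) = 0 →
      TGstar p σ Gstar μ ≤ C * (R * B + σ) ^ 2 / σ := by
  refine ⟨64, by norm_num, ?_⟩
  intro p σ B R hσ hB hR μ hμ hμB Gstar hG hGR
  haveI := hμ; haveI := hG
  exact TGstar_bound_aux σ B R hσ hB hR μ hμB Gstar hGR
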